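/- Let m and r be natural numbers with r ≤ m, let d_1, …, d_m be positive integers, and let e be a positive integer. Suppose Q, P ∈ ℤ[X] satisfy: Q has constant coefficient 1; deg Q ≤ r; deg P ≤ m; the coefficient of X^m in P equals d_1⋯d_m; and e·X^r·∏_{i=1}^{m} (1 + d_i·X) = Q·P in ℤ[X]. Then there exists a sub-multiset T of the multiset {d_1, …, d_m}, of cardinality r, such that Q = ∏_{a ∈ T} (1 + a·X), e = ∏_{a ∈ T} a, and P = e·X^r·∏_{a ∈ T^c} (1 + a·X), where T^c is the complementary sub-multiset. -/

import Mathlib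

open Polynomial

/-- Each `1 + aX` with `a ≠ 0` is prime in `ℤ[X]`. -/
lemma prime_one_add_C_mul_X (a : ℤ) (ha : a ≠ 0) :
    Prime (1 + Polynomial.C a * Polynomial.X) := by
  have hcoeff0 : (1 + C a * X).coeff 0 = 1 := by simp
  have hdeg : (1 + C a * X).natDegree = 1 := by
    have : (1 + C a * X) = C a * X + C 1 := by rw [add_comm, map_one]
    rw [this, natDegree_add_C, natDegree_C_mul_X a ha]
  rw [← UniqueFactorizationMonoid.irreducible_iff_prime]
  constructor
  · intro hu
    have := natDegree_eq_zero_of_isUnit hu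
    omega
  · intro f g hfg
    have hfg0 : f * g ≠ 0 := by
      rw [← hfg]; intro h0; rw [h0] at hdeg; simp at hdeg
    have hf0 : f ≠ 0 := fun h => hfg0 (by simp [h])
    have hg0 : g ≠ 0 := fun h => hfg0 (by simp [h])
    have hsum : f.natDegree + g.natDegree = 1 := by
      rw [← natDegree_mul hf0 hg0, ← hfg, hdeg]
    have key : ∀ h₁ h₂ : ℤ[X], h₁ * h₂ = 1 + C a * X → h₁.natDegree = 0 → IsUnit h₁ := by
      intro h₁ h₂ hh hdeg1
      obtain ⟨c, rfl⟩ := natDegree_eq_zero.mp hdeg1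
      have hc : c ∣ (1 + C a * X).coeff 0 :=
        (C_dvd_iff_dvd_coeff c _).mp ⟨h₂, hh.symm⟩ 0
      rw [hcoeff0] at hc
      exact isUnit_C.mpr (isUnit_of_dvd_one hc)
    rcases Nat.eq_zero_or_pos f.natDegree with hf | hf
    · exact Or.inl (key f g hfg.symm hf)
    · exact Or.inr (key g f (by rw [mul_comm]; exact hfg.symm) (by omega))

/-- A divisor of a product of primes indexed by a multiset is, up to a unit,
a product over a sub-multiset. -/
lemma exists_le_associated_of_dvd_prod_primes {α β : Type*} [CommMonoidWithZero β] [IsCancelMulZero β]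
    (f : α → β) :
    ∀ (s : Multiset α), (∀ a ∈ s, Prime (f a)) → ∀ Q : β, Q ∣ (s.map f).prod →
      ∃ T ≤ s, Associated Q ((T.map f).prod) := by
  intro s
  induction s using Multiset.induction_on with
  | empty =>
    intro _ Q hQ
    refine ⟨0, le_rfl, ?_⟩
    simp only [Multiset.map_zero, Multiset.prod_zero]
    exact associated_one_iff_isUnit.mpr (isUnit_of_dvd_one (by simpa using hQ))
  | cons a s ih =>
    intro hs Q hQ
    have hp : Prime (f a) := hs a (Multiset.mem_cons_self _ _)
    rw [Multiset.map_cons, Multiset.prod_cons] at hQ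
    obtain ⟨H, hH⟩ := hQ
    have hdvd : f a ∣ Q * H := ⟨(s.map f).prod, hH.symm⟩
    have hs' : ∀ b ∈ s, Prime (f b) := fun b hb => hs b (Multiset.mem_cons_of_mem hb)
    rcases hp.2.2 Q H hdvd with h | h
    · obtain ⟨Q', rfl⟩ := h
      have hcancel : (s.map f).prod = Q' * H := by
        apply mul_left_cancel₀ hp.ne_zero
        rw [hH, mul_assoc]
      obtain ⟨T, hT, hassoc⟩ := ih hs' Q' ⟨H, hcancel⟩
      refine ⟨a ::ₘ T, Multiset.cons_le_cons a hT, ?_⟩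
      rw [Multiset.map_cons, Multiset.prod_cons]
      exact Associated.mul_left (f a) hassoc
    · obtain ⟨H', rfl⟩ := h
      have hcancel : (s.map f).prod = Q * H' := by
        apply mul_left_cancel₀ hp.ne_zero
        rw [hH, mul_left_comm]
      obtain ⟨T, hT, hassoc⟩ := ih hs' Q ⟨H', hcancel⟩
      exact ⟨T, hT.trans (Multiset.le_cons_self _ _), hassoc⟩

/-- A polynomial over `ℤ` with constant coefficient `1` that divides `C e * G`
(with `e` a positive integer) divides `G`. -/
lemma dvd_of_dvd_C_mul {Q : ℤ[X]} (hQprim : ∀ c : ℤ, Polynomial.C c ∣ Q → IsUnit c) :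
    ∀ (l : List ℕ), (∀ p ∈ l, p.Prime) → ∀ G : ℤ[X],
      Q ∣ Polynomial.C (l.prod : ℤ) * G → Q ∣ G := by
  intro l
  induction l with
  | nil => intro _ G h; simpa using h
  | cons p l ih =>
    intro hl G h
    have hp : Prime (Polynomial.C ((p : ℕ) : ℤ)) :=
      Polynomial.prime_C_iff.mpr (Nat.prime_iff_prime_int.mp (hl p List.mem_cons_self))
    have h' : Q ∣ Polynomial.C ((p : ℕ) : ℤ) * (Polynomial.C (l.prod : ℤ) * G) := by
      have : ((p :: l).prod : ℤ) = ((p : ℕ) : ℤ) * (l.prod : ℤ) := by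
        rw [List.prod_cons]; push_cast; ring
      rw [this, map_mul] at h
      rwa [← mul_assoc]
    -- strip the single prime `C p`
    obtain ⟨H, hH⟩ := h'
    have hpd : Polynomial.C ((p : ℕ) : ℤ) ∣ Q * H :=
      ⟨Polynomial.C (l.prod : ℤ) * G, hH.symm⟩
    rcases hp.2.2 Q H hpd with hc | hc
    · exfalso
      have hup : IsUnit ((p : ℕ) : ℤ) := by
        rcases hc with ⟨c', hc'⟩
        exact hQprim _ ⟨c', hc'⟩
      exact (Nat.prime_iff_prime_int.mp (hl p List.mem_cons_self)).not_unit hup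
    · obtain ⟨H', rfl⟩ := hc
      have : Polynomial.C (l.prod : ℤ) * G = Q * H' := by
        apply mul_left_cancel₀ hp.ne_zero
        rw [hH]; ring
      exact ih (fun q hq => hl q (List.mem_cons_of_mem _ hq)) G ⟨H', this⟩

lemma natDegree_one_add_C_mul_X (a : ℤ) (ha : a ≠ 0) :
    (1 + Polynomial.C a * Polynomial.X).natDegree = 1 := by
  have : (1 + C a * X) = C a * X + C 1 := by rw [add_comm, map_one]
  rw [this, natDegree_add_C, natDegree_C_mul_X a ha]

lemma leadingCoeff_one_add_C_mul_X (a : ℤ) (ha : a ≠ 0) :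
    (1 + Polynomial.C a * Polynomial.X).leadingCoeff = a := by
  rw [leadingCoeff, natDegree_one_add_C_mul_X a ha]
  simp [coeff_one]

lemma constantCoeff_prod_one_add (u : Multiset ℕ) :
    Polynomial.constantCoeff ((u.map fun a : ℕ => 1 + Polynomial.C (a : ℤ) * Polynomial.X).prod)
      = 1 := by
  rw [map_multiset_prod, Multiset.map_map]
  have : Multiset.map (⇑Polynomial.constantCoeff ∘ fun a : ℕ => 1 + C (a : ℤ) * X) u
      = Multiset.map (fun _ : ℕ => (1 : ℤ)) u := by
    apply Multiset.map_congr rfl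
    intro a _
    simp
  rw [this]
  simp

lemma prod_one_add_ne_zero (u : Multiset ℕ) :
    ((u.map fun a : ℕ => 1 + Polynomial.C (a : ℤ) * Polynomial.X).prod) ≠ 0 := by
  intro h
  have := constantCoeff_prod_one_add u
  rw [h] at this
  simp at this

lemma natDegree_prod_one_add (u : Multiset ℕ) (hu : ∀ a ∈ u, 0 < a) :
    ((u.map fun a : ℕ => 1 + Polynomial.C (a : ℤ) * Polynomial.X).prod).natDegree
      = Multiset.card u := by
  rw [natDegree_multiset_prod, Multiset.map_map]
  · have : Multiset.map (natDegree ∘ fun a : ℕ => 1 + C (a : ℤ) * X) u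
        = Multiset.map (fun _ : ℕ => (1 : ℕ)) u := by
      apply Multiset.map_congr rfl
      intro a ha
      exact natDegree_one_add_C_mul_X (a : ℤ) (by exact_mod_cast (hu a ha).ne')
    rw [this]
    simp [Multiset.map_const']
  · intro h0
    obtain ⟨a, _, ha⟩ := Multiset.mem_map.mp h0
    have : (1 + C (a : ℤ) * X).coeff 0 = 1 := by simp
    rw [ha] at this
    simp at this

lemma leadingCoeff_prod_one_add (u : Multiset ℕ) (hu : ∀ a ∈ u, 0 < a) :
    ((u.map fun a : ℕ => 1 + Polynomial.C (a : ℤ) * Polynomial.X).prod).leadingCoeff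
      = (u.map fun a : ℕ => (a : ℤ)).prod := by
  rw [leadingCoeff_multiset_prod, Multiset.map_map]
  apply congrArg
  apply Multiset.map_congr rfl
  intro a ha
  exact leadingCoeff_one_add_C_mul_X (a : ℤ) (by exact_mod_cast (hu a ha).ne')

lemma map_do_norm (g : ℤ → Polynomial ℤ) (T : Multiset ℕ) :
    Multiset.map g (do let a ← T; pure ((a : ℤ))) = T.map (fun a : ℕ => g (a : ℤ)) := by
  change Multiset.map g (T.bind fun a => {(a : ℤ)}) = _
  rw [Multiset.bind_singleton, Multiset.map_map]
  rfl

/-- Unique factorization step in the proof that local complete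
intersections of small codimension have the Segre zeta function of a global complete
intersection: if `e·X^r·∏ᵢ(1 + dᵢX) = Q·P` with `Q(0) = 1`, `deg Q ≤ r`, `deg P ≤ m`,
and the coefficient of `X^m` in `P` equal to `d₁⋯d_m`, then `Q` is the product of the
factors `(1 + aX)` over a sub-multiset `T` of `{d₁, …, d_m}` of cardinality `r`,
`e = ∏_{a ∈ T} a`, and `P = e·X^r·∏_{a ∈ Tᶜ} (1 + aX)`. -/
theorem unique_factorization_lci (m r : ℕ) (hrm : r ≤ m) (d : Fin m → ℕ)
    (hd : ∀ i, 0 < d i) (e : ℕ) (he : 0 < e) (Q P : Polynomial ℤ)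
    (hQ0 : Q.coeff 0 = 1) (hQdeg : Q.natDegree ≤ r) (hPdeg : P.natDegree ≤ m)
    (hPtop : P.coeff m = ∏ i, (d i : ℤ))
    (heq : Polynomial.C (e : ℤ) * Polynomial.X ^ r *
        ∏ i, (1 + Polynomial.C (d i : ℤ) * Polynomial.X) = Q * P) :
    ∃ T : Multiset ℕ, T ≤ Finset.univ.val.map d ∧ Multiset.card T = r ∧
      Q = (T.map fun a => 1 + Polynomial.C (a : ℤ) * Polynomial.X).prod ∧
      e = T.prod ∧
      P = Polynomial.C (e : ℤ) * Polynomial.X ^ r *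
        ((Finset.univ.val.map d - T).map
          fun a => 1 + Polynomial.C (a : ℤ) * Polynomial.X).prod := by
  set s : Multiset ℕ := Finset.univ.val.map d with hs
  have hsmem : ∀ a ∈ s, 0 < a := by
    intro a ha
    obtain ⟨i, _, rfl⟩ := Multiset.mem_map.mp ha
    exact hd i
  have hscard : Multiset.card s = m := by simp [hs]
  set G : Polynomial ℤ := (s.map fun a : ℕ => 1 + C (a : ℤ) * X).prod with hG
  have hGprod : (∏ i, (1 + C (d i : ℤ) * X)) = G := by
    rw [hG, hs, Multiset.map_map, Finset.prod_eq_multiset_prod]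
    rfl
  have hGne : G ≠ 0 := prod_one_add_ne_zero s
  have hGdeg : G.natDegree = m := by rw [hG, natDegree_prod_one_add s hsmem, hscard]
  have heq' : C (e : ℤ) * X ^ r * G = Q * P := by rw [← hGprod]; exact heq
  have heC : (e : ℤ) ≠ 0 := Int.natCast_ne_zero.mpr he.ne'
  have hLne : C (e : ℤ) * X ^ r ≠ 0 :=
    mul_ne_zero (fun h => heC (by simpa using congrArg (fun p => Polynomial.coeff p 0) h))
      (pow_ne_zero r X_ne_zero)
  have hLHSne : C (e : ℤ) * X ^ r * G ≠ 0 := mul_ne_zero hLne hGne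
  have hQne : Q ≠ 0 := fun h => hLHSne (by rw [heq', h, zero_mul])
  have hPne : P ≠ 0 := fun h => hLHSne (by rw [heq', h, mul_zero])
  have hLdeg : (C (e : ℤ) * X ^ r * G).natDegree = r + m := by
    rw [natDegree_mul hLne hGne, natDegree_C_mul_X_pow r (e : ℤ) heC, hGdeg]
  have hdegsum : Q.natDegree + P.natDegree = r + m := by
    rw [← natDegree_mul hQne hPne, ← heq', hLdeg]
  have hQr : Q.natDegree = r := by omega
  have hPm : P.natDegree = m := by omega
  -- X^r divides P
  have hXdvd : (X : Polynomial ℤ) ^ r ∣ P := by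
    refine (prime_X (R := ℤ)).pow_dvd_of_dvd_mul_left (a := Q) r ?_ ?_
    · rw [X_dvd_iff, hQ0]
      exact one_ne_zero
    · exact ⟨C (e : ℤ) * G, by rw [← heq']; ring⟩
  obtain ⟨P₁, hP₁⟩ := hXdvd
  have hQP₁ : C (e : ℤ) * G = Q * P₁ := by
    apply mul_left_cancel₀ (pow_ne_zero r (X_ne_zero (R := ℤ)))
    linear_combination heq' + Q * hP₁
  -- Q is primitive
  have hQprim : ∀ c : ℤ, C c ∣ Q → IsUnit c := by
    intro c hc
    have := (C_dvd_iff_dvd_coeff c Q).mp hc 0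
    rw [hQ0] at this
    exact isUnit_of_dvd_one this
  -- Q divides G
  have hQdvdG : Q ∣ G := by
    refine dvd_of_dvd_C_mul hQprim e.primeFactorsList
      (fun p hp => Nat.prime_of_mem_primeFactorsList hp) G ?_
    have hep : ((e.primeFactorsList.prod : ℕ) : ℤ) = (e : ℤ) := by
      rw [Nat.prod_primeFactorsList he.ne']
    rw [hep]
    exact ⟨P₁, hQP₁⟩
  -- factor Q as a sub-product
  have hprimes : ∀ a ∈ s, Prime (1 + C (a : ℤ) * X) := fun a ha =>
    prime_one_add_C_mul_X (a : ℤ) (by exact_mod_cast (hsmem a ha).ne')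
  obtain ⟨T, hT, hassoc⟩ :=
    exists_le_associated_of_dvd_prod_primes (fun a : ℕ => 1 + C (a : ℤ) * X) s hprimes Q
      (hG ▸ hQdvdG)
  have hTmem : ∀ a ∈ T, 0 < a := fun a ha => hsmem a (Multiset.mem_of_le hT ha)
  -- the unit is 1
  obtain ⟨u, hu⟩ := hassoc
  obtain ⟨c, hcu, hcC⟩ := Polynomial.isUnit_iff.mp u.isUnit
  have hconst : Polynomial.constantCoeff (Q * (u : Polynomial ℤ)) = 1 := by
    rw [hu]
    exact constantCoeff_prod_one_add T
  have hc1 : c = 1 := by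
    rw [map_mul, ← hcC] at hconst
    have h1 : Polynomial.constantCoeff Q = 1 := hQ0
    have h2 : Polynomial.constantCoeff (C c) = c := by simp
    rw [h1, h2, one_mul] at hconst
    exact hconst
  have hQeq : Q = (T.map fun a : ℕ => 1 + C (a : ℤ) * X).prod := by
    rw [← hu, ← hcC, hc1, map_one, mul_one]
  have hTcard : Multiset.card T = r := by
    rw [← hQr, hQeq, natDegree_prod_one_add T hTmem]
  -- split the product
  set Gc : Polynomial ℤ := ((s - T).map fun a : ℕ => 1 + C (a : ℤ) * X).prod with hGc
  have hTs : s - T + T = s := tsub_add_cancel_of_le hT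
  have hGsplit : G = Q * Gc := by
    rw [hG, hQeq, hGc, ← hTs]
    rw [Multiset.map_add, Multiset.prod_add]
    ring_nf
    rw [hTs]
    ring
  have hGcmem : ∀ a ∈ s - T, 0 < a := fun a ha =>
    hsmem a (Multiset.mem_of_le tsub_le_self ha)
  have hGccard : Multiset.card (s - T) = m - r := by
    rw [Multiset.card_sub hT, hscard, hTcard]
  have hP₁eq : P₁ = C (e : ℤ) * Gc := by
    apply mul_left_cancel₀ hQne
    rw [← hQP₁, hGsplit]
    ring
  have hPfin : P = C (e : ℤ) * X ^ r * Gc := by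
    rw [hP₁, hP₁eq]
    ring
  have hGcdeg : Gc.natDegree = m - r := by
    rw [hGc, natDegree_prod_one_add _ hGcmem, hGccard]
  have hGclead : Gc.leadingCoeff = ((s - T).map fun a : ℕ => (a : ℤ)).prod := by
    rw [hGc]
    exact leadingCoeff_prod_one_add _ hGcmem
  have hcoeffm : P.coeff m = (e : ℤ) * ((s - T).map fun a : ℕ => (a : ℤ)).prod := by
    rw [hPfin, mul_assoc, coeff_C_mul]
    congr 1
    have hm : m = m - r + r := (Nat.sub_add_cancel hrm).symm
    rw [hm, coeff_X_pow_mul, ← hGclead, leadingCoeff, hGcdeg]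
  have hdprod : (∏ i, (d i : ℤ)) = (s.map fun a : ℕ => (a : ℤ)).prod := by
    rw [hs, Multiset.map_map, Finset.prod_eq_multiset_prod]
    rfl
  have hsplitint : (s.map fun a : ℕ => (a : ℤ)).prod
      = ((T.map fun a : ℕ => (a : ℤ)).prod) * (((s - T).map fun a : ℕ => (a : ℤ)).prod) := by
    conv_lhs => rw [← hTs]
    rw [Multiset.map_add, Multiset.prod_add]
    ring
  have hsubne : (((s - T).map fun a : ℕ => (a : ℤ)).prod) ≠ 0 := by
    rw [Ne, Multiset.prod_eq_zero_iff]
    intro h0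
    obtain ⟨a, ha, ha0⟩ := Multiset.mem_map.mp h0
    exact absurd ha0 (by exact_mod_cast (hGcmem a ha).ne')
  have heT : (e : ℤ) = ((T.map fun a : ℕ => (a : ℤ)).prod) := by
    apply mul_right_cancel₀ hsubne
    rw [← hcoeffm, hPtop, hdprod, hsplitint]
  have heT' : e = T.prod := by
    have hcast : ((T.prod : ℕ) : ℤ) = (T.map fun a : ℕ => (a : ℤ)).prod := by
      push_cast
      rfl
    exact_mod_cast heT.trans hcast.symm
  refine ⟨T, hT, hTcard, ?_, heT', ?_⟩
  · rw [map_do_norm]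
    exact hQeq
  · rw [map_do_norm]
    rw [hPfin, hGc]
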